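/- There exist a constant c > 0 and thresholds n₀ and w₀ such that for every conflict-free deterministic distributed broadcast algorithm on a multiple-access channel with n ≥ n₀ nodes and every window size w ≥ w₀, there is a window adversary with individual injection rates of window w and aggregate injection rate strictly less than 1, and an execution of the algorithm against this adversary in which some packet is delayed by at least c · n · w rounds. -/

import Mathlib

/-- Feedback that a node may receive from the channel in a round. -/
inductive Feedback (n : ℕ) (M : Type) where
  | heard : Fin n → M → Feedback n M
  | silence : Feedback n M
  | collision : Feedback n M

/-- A deterministic distributed broadcast algorithm for a multiple-access channel
with `n` nodes.  Each node has a set of states with a designated initial state;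
from its state and the information whether its FIFO queue is nonempty it decides
whether to transmit, and which message content to transmit; its deterministic
state transition depends on its previous state, whether its queue was nonempty,
the feedback from the channel, and the number of packets injected into it in the
round. -/
structure Algo (n : ℕ) where
  State : Type
  Msg : Type
  init : Fin n → State
  send : Fin n → State → Bool → Bool
  msg : Fin n → State → Msg
  next : Fin n → State → Bool → Feedback n Msg → ℕ → State

/-- An execution of an algorithm against the injection pattern `a`
(`a t i` is the number of packets injected into node `i` in round `t`);
`cd` records whether the channel is with collision detection. -/
structure Exec {n : ℕ} (A : Algo n) (cd : Bool) (a : ℕ → Fin n → ℕ) where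
  state : ℕ → Fin n → A.State
  queue : ℕ → Fin n → ℕ

namespace Exec

variable {n : ℕ} {A : Algo n} {cd : Bool} {a : ℕ → Fin n → ℕ}

/-- Node `i` transmits in round `t`. -/
def transmits (E : Exec A cd a) (t : ℕ) (i : Fin n) : Bool :=
  A.send i (E.state t i) (decide (0 < E.queue t i))

/-- The set of nodes transmitting in round `t`. -/
def transmitters (E : Exec A cd a) (t : ℕ) : Finset (Fin n) :=
  Finset.univ.filter fun i => E.transmits t i = true

/-- The feedback delivered by the channel in round `t`: if exactly one node
transmits then its message is heard by every node; with no transmitters the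
round is silent; with at least two transmitters a collision occurs, which is
perceived as silence when the channel is without collision detection. -/
noncomputable def feedback (E : Exec A cd a) (t : ℕ) : Feedback n A.Msg :=
  if h : ∃ i, E.transmitters t = {i} then
    Feedback.heard h.choose (A.msg h.choose (E.state t h.choose))
  else if E.transmitters t = ∅ then Feedback.silence
  else if cd then Feedback.collision else Feedback.silence

/-- A packet (from node `i`) is heard in round `t`: node `i` is the unique
transmitter in round `t` and it has a packet (the head of its FIFO queue). -/
def PacketHeard (E : Exec A cd a) (t : ℕ) (i : Fin n) : Prop :=
  E.transmitters t = {i} ∧ 0 < E.queue t i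

instance (E : Exec A cd a) (t : ℕ) (i : Fin n) : Decidable (E.PacketHeard t i) := by
  unfold PacketHeard; infer_instance

/-- The execution obeys the dynamics: initial states and empty initial queues;
states evolve by the algorithm's transition function; a queue grows by the
injected packets and loses a packet exactly when this packet is heard. -/
def Valid (E : Exec A cd a) : Prop :=
  (∀ i, E.state 0 i = A.init i) ∧
  (∀ i, E.queue 0 i = 0) ∧
  (∀ t i, E.state (t + 1) i =
      A.next i (E.state t i) (decide (0 < E.queue t i)) (E.feedback t) (a t i)) ∧
  (∀ t i, E.queue (t + 1) i =
      E.queue t i + a t i - (if E.PacketHeard t i then 1 else 0))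

/-- The number of packets of node `i` heard in rounds `0, …, t-1`. -/
def heardCum (E : Exec A cd a) (i : Fin n) (t : ℕ) : ℕ :=
  ((Finset.range t).filter fun u => E.PacketHeard u i).card

/-- The total number of packets stored in queues at round `t`. -/
def totalQueue (E : Exec A cd a) (t : ℕ) : ℕ := ∑ i, E.queue t i

end Exec

/-- The number of packets injected into node `i` in rounds `0, …, t-1`. -/
def injCum {n : ℕ} (a : ℕ → Fin n → ℕ) (i : Fin n) (t : ℕ) : ℕ :=
  ∑ u ∈ Finset.range t, a u i

/-- `a` is an injection pattern allowed for a window adversary with individual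
injection rates, of window size `w` and shares `s`: in every interval of `w`
consecutive rounds, at most `s i` packets are injected into node `i`. -/
def Conforms {n : ℕ} (a : ℕ → Fin n → ℕ) (w : ℕ) (s : Fin n → ℕ) : Prop :=
  ∀ (i : Fin n) (t : ℕ), ∑ u ∈ Finset.Ico t (t + w), a u i ≤ s i

/-- A non-adaptive algorithm: a transmitted message consists of a packet only,
with no control bits (so the content of a message carries no information), and
a node cannot transmit a message when it has no packet. -/
def Algo.NonAdaptive {n : ℕ} (A : Algo n) : Prop :=
  (∀ i s s', A.msg i s = A.msg i s') ∧ (∀ i s, A.send i s false = false)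

/-- An acknowledgment-based algorithm: a node without packets to transmit stays
in its initial state, and a node resets its state to the initial state
immediately after a successful transmission. -/
def Algo.AckBased {n : ℕ} (A : Algo n) : Prop :=
  (∀ i s fb, A.next i s false fb 0 = A.init i) ∧
  (∀ i s q fb k, (∃ m, fb = Feedback.heard i m) → A.next i s q fb k = A.init i)

/-- A conflict-free algorithm: in any execution, at most one node transmits in
each round. -/
def Algo.ConflictFree {n : ℕ} (A : Algo n) : Prop :=
  ∀ (cd : Bool) (a : ℕ → Fin n → ℕ) (E : Exec A cd a), E.Valid →
    ∀ t, (E.transmitters t).card ≤ 1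

/-- Every packet is heard within `L` rounds of its injection: for each node `i`,
all packets injected into `i` in rounds `0, …, r` are heard by round `r + L`
(FIFO counting formulation). -/
def Exec.LatencyBound {n : ℕ} {A : Algo n} {cd : Bool} {a : ℕ → Fin n → ℕ}
    (E : Exec A cd a) (L : ℕ) : Prop :=
  ∀ (i : Fin n) (r : ℕ), injCum a i (r + 1) ≤ E.heardCum i (r + L + 1)

/-- Some packet is delayed by at least `D` rounds: for some node `i` and round
`r`, fewer packets of node `i` are heard in rounds `0, …, r + D - 1` than were
injected into `i` in rounds `0, …, r`, so some packet injected by round `r`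
spends at least `D` rounds in the queue. -/
def Exec.DelayAtLeast {n : ℕ} {A : Algo n} {cd : Bool} {a : ℕ → Fin n → ℕ}
    (E : Exec A cd a) (D : ℕ) : Prop :=
  ∃ (i : Fin n) (r : ℕ), E.heardCum i (r + D) < injCum a i (r + 1)

/-- The number of packets stored in queues grows without bound. -/
def Exec.UnboundedQueues {n : ℕ} {A : Algo n} {cd : Bool} {a : ℕ → Fin n → ℕ}
    (E : Exec A cd a) : Prop :=
  ∀ B : ℕ, ∃ t, B < E.totalQueue t
namespace Stmt4
open Finset

variable {n : ℕ} (A : Algo n)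

def pTrans (p : (Fin n → A.State) × (Fin n → ℕ)) : Finset (Fin n) :=
  Finset.univ.filter fun i => A.send i (p.1 i) (decide (0 < p.2 i)) = true

noncomputable def pFb (cd : Bool) (p : (Fin n → A.State) × (Fin n → ℕ)) :
    Feedback n A.Msg :=
  if h : ∃ i, pTrans A p = {i} then
    Feedback.heard h.choose (A.msg h.choose (p.1 h.choose))
  else if pTrans A p = ∅ then Feedback.silence
  else if cd then Feedback.collision else Feedback.silence

noncomputable def run (cd : Bool) (a : ℕ → Fin n → ℕ) : ℕ → (Fin n → A.State) × (Fin n → ℕ)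
  | 0 => (A.init, fun _ => 0)
  | (t+1) =>
      let p := run cd a t
      (fun i => A.next i (p.1 i) (decide (0 < p.2 i)) (pFb A cd p) (a t i),
       fun i => p.2 i + a t i - (if pTrans A p = {i} ∧ 0 < p.2 i then 1 else 0))

noncomputable def mkE (cd : Bool) (a : ℕ → Fin n → ℕ) : Exec A cd a :=
  ⟨fun t => (run A cd a t).1, fun t => (run A cd a t).2⟩

lemma mkE_trans (cd a) (t : ℕ) : (mkE A cd a).transmitters t = pTrans A (run A cd a t) := rfl

lemma mkE_fb (cd a) (t : ℕ) : (mkE A cd a).feedback t = pFb A cd (run A cd a t) := rfl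

lemma mkE_heard_iff (cd a) (t : ℕ) (i : Fin n) :
    (mkE A cd a).PacketHeard t i ↔ (pTrans A (run A cd a t) = {i} ∧ 0 < (run A cd a t).2 i) :=
  Iff.rfl

lemma mkE_valid (cd a) : (mkE A cd a).Valid := by
  refine ⟨fun i => rfl, fun i => rfl, fun t i => rfl, fun t i => ?_⟩
  show (run A cd a (t+1)).2 i = _
  rw [run]
  simp only [Exec.PacketHeard, mkE_trans]
  rfl

end Stmt4
namespace Stmt4
open Finset

variable {n : ℕ} {A : Algo n} {cd : Bool}

lemma eq_singleton_of_mem {α : Type*} {s : Finset α} {j : α} (hj : j ∈ s)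
    (h1 : s.card ≤ 1) : s = {j} := by
  refine Finset.eq_singleton_iff_unique_mem.mpr ⟨hj, fun x hx => ?_⟩
  rcases Finset.card_le_one.mp h1 x hx j hj with h; exact h

lemma mem_trans_iff {a : ℕ → Fin n → ℕ} (E : Exec A cd a) (t : ℕ) (i : Fin n) :
    i ∈ E.transmitters t ↔ A.send i (E.state t i) (decide (0 < E.queue t i)) = true := by
  simp only [Exec.transmitters, Exec.transmits]
  exact Finset.mem_filter.trans (and_iff_right (Finset.mem_univ i))

lemma fb_singleton {a : ℕ → Fin n → ℕ} {E : Exec A cd a} {t : ℕ} {j : Fin n}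
    (hT : E.transmitters t = {j}) :
    E.feedback t = Feedback.heard j (A.msg j (E.state t j)) := by
  have hex : ∃ i, E.transmitters t = {i} := ⟨j, hT⟩
  have hcs := hex.choose_spec
  have : hex.choose = j := by
    have := hcs.symm.trans hT
    exact Finset.singleton_injective this
  unfold Exec.feedback
  rw [dif_pos hex, this]

lemma fb_empty {a : ℕ → Fin n → ℕ} {E : Exec A cd a} {t : ℕ}
    (hT : E.transmitters t = ∅) : E.feedback t = Feedback.silence := by
  have hex : ¬ ∃ i, E.transmitters t = {i} := by
    rintro ⟨i, hi⟩; rw [hT] at hi; exact (Finset.singleton_ne_empty i) hi.symm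
  unfold Exec.feedback
  rw [dif_neg hex, if_pos hT]

lemma trans_of_fb_heard {a : ℕ → Fin n → ℕ} {E : Exec A cd a} {t : ℕ} {j : Fin n}
    {m : A.Msg} (h : E.feedback t = Feedback.heard j m) :
    E.transmitters t = {j} ∧ m = A.msg j (E.state t j) := by
  by_cases hex : ∃ i, E.transmitters t = {i}
  · obtain ⟨i, hi⟩ := hex
    rw [fb_singleton hi] at h
    obtain ⟨h1, h2⟩ := Feedback.heard.inj h
    subst h1; exact ⟨hi, h2.symm⟩
  · exfalso
    unfold Exec.feedback at h
    rw [dif_neg hex] at h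
    split_ifs at h <;> exact Feedback.noConfusion h

lemma mem_trans_of_fb_eq {a a' : ℕ → Fin n → ℕ} {E : Exec A cd a} {E' : Exec A cd a'}
    {t : ℕ} {v : Fin n} (h1 : (E.transmitters t).card ≤ 1)
    (hfb : E.feedback t = E'.feedback t) (hv : v ∈ E.transmitters t) :
    E'.transmitters t = {v} := by
  have hT : E.transmitters t = {v} := eq_singleton_of_mem hv h1
  have := fb_singleton hT
  rw [hfb] at this
  exact (trans_of_fb_heard this).1

lemma fb_ext {a a' : ℕ → Fin n → ℕ} {E : Exec A cd a} {E' : Exec A cd a'} {t : ℕ}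
    (hT : E.transmitters t = E'.transmitters t)
    (hmsg : ∀ j ∈ E.transmitters t, A.msg j (E.state t j) = A.msg j (E'.state t j)) :
    E.feedback t = E'.feedback t := by
  by_cases hex : ∃ i, E'.transmitters t = {i}
  · obtain ⟨j, hj⟩ := hex
    rw [fb_singleton (hT.trans hj), fb_singleton hj]
    have : j ∈ E.transmitters t := by rw [hT, hj]; exact Finset.mem_singleton_self j
    rw [hmsg j this]
  · by_cases hem : E'.transmitters t = ∅
    · rw [fb_empty (hT.trans hem), fb_empty hem]
    · have hex' : ¬ ∃ i, E.transmitters t = {i} := by rw [hT]; exact hex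
      have hem' : ¬ E.transmitters t = ∅ := by rw [hT]; exact hem
      unfold Exec.feedback
      rw [dif_neg hex, dif_neg hex', if_neg hem, if_neg hem']

/-- The key agreement lemma: if two injection patterns differ only at nodes
satisfying `p`, then as long as the feedbacks agree, all nodes outside `p`
have identical states and queues. -/
lemma agree (hCF : A.ConflictFree) (p : Fin n → Prop) (a a' : ℕ → Fin n → ℕ)
    (hdiff : ∀ t j, ¬ p j → a t j = a' t j) :
    ∀ t, (∀ u, u < t → (mkE A cd a).feedback u = (mkE A cd a').feedback u) →
      ∀ j, ¬ p j →
        (mkE A cd a).state t j = (mkE A cd a').state t j ∧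
        (mkE A cd a).queue t j = (mkE A cd a').queue t j := by
  intro t
  induction t with
  | zero => intro _ j _; exact ⟨rfl, rfl⟩
  | succ t ih =>
    intro hfb j hj
    have IH := ih (fun u hu => hfb u (Nat.lt_succ_of_lt hu))
    have hmemb : ∀ k, ¬ p k →
        (k ∈ (mkE A cd a).transmitters t ↔ k ∈ (mkE A cd a').transmitters t) := by
      intro k hk
      rw [mem_trans_iff, mem_trans_iff, (IH k hk).1, (IH k hk).2]
    have hheard : (mkE A cd a).PacketHeard t j ↔ (mkE A cd a').PacketHeard t j := by
      have c1 := hCF cd a (mkE A cd a) (mkE_valid A cd a) t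
      have c2 := hCF cd a' (mkE A cd a') (mkE_valid A cd a') t
      constructor
      · rintro ⟨hT, hq⟩
        have : j ∈ (mkE A cd a').transmitters t := by
          rw [← hmemb j hj, hT]; exact Finset.mem_singleton_self j
        exact ⟨eq_singleton_of_mem this c2, (IH j hj).2 ▸ hq⟩
      · rintro ⟨hT, hq⟩
        have : j ∈ (mkE A cd a).transmitters t := by
          rw [hmemb j hj, hT]; exact Finset.mem_singleton_self j
        exact ⟨eq_singleton_of_mem this c1, ((IH j hj).2).symm ▸ hq⟩
    constructor
    · have e1 := (mkE_valid A cd a).2.2.1 t j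
      have e2 := (mkE_valid A cd a').2.2.1 t j
      rw [e1, e2, (IH j hj).1, (IH j hj).2, hfb t (Nat.lt_succ_self t), hdiff t j hj]
    · have e1 := (mkE_valid A cd a).2.2.2 t j
      have e2 := (mkE_valid A cd a').2.2.2 t j
      rw [e1, e2, (IH j hj).2, hdiff t j hj]
      congr 1
      exact if_congr hheard rfl rfl

lemma memb_iff_of_agree {a a' : ℕ → Fin n → ℕ} {t : ℕ} {j : Fin n}
    (hs : (mkE A cd a).state t j = (mkE A cd a').state t j)
    (hq : (mkE A cd a).queue t j = (mkE A cd a').queue t j) :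
    (j ∈ (mkE A cd a).transmitters t ↔ j ∈ (mkE A cd a').transmitters t) := by
  rw [mem_trans_iff, mem_trans_iff, hs, hq]

end Stmt4
namespace Stmt4
open Finset

variable {n : ℕ} {A : Algo n} {cd : Bool}

/-- Two distinct nodes cannot both "claim" the same round `d`:
if pattern `a1` differs from `a` only at `v`, pattern `a2` differs from `a`
only at `v'`, feedbacks agree with the base execution before `d`, then `v`
and `v'` cannot both transmit at round `d` in their respective executions. -/
lemma noTwoClaim (hCF : A.ConflictFree) {a a1 a2 : ℕ → Fin n → ℕ} {v v' : Fin n}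
    (hvv' : v ≠ v')
    (hd1 : ∀ t j, j ≠ v → a1 t j = a t j)
    (hd2 : ∀ t j, j ≠ v' → a2 t j = a t j)
    {d : ℕ}
    (hfb1 : ∀ u, u < d → (mkE A cd a).feedback u = (mkE A cd a1).feedback u)
    (hfb2 : ∀ u, u < d → (mkE A cd a).feedback u = (mkE A cd a2).feedback u)
    (hm1 : v ∈ (mkE A cd a1).transmitters d)
    (hm2 : v' ∈ (mkE A cd a2).transmitters d) : False := by
  classical
  set a'' : ℕ → Fin n → ℕ := fun t j => if j = v then a1 t j else if j = v' then a2 t j else a t j with ha''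
  have hd''1 : ∀ t j, ¬ (j = v') → a'' t j = a1 t j := by
    intro t j hj
    by_cases hjv : j = v
    · simp [ha'', hjv]
    · simp [ha'', hjv, hj, hd1 t j hjv]
  have hd''2 : ∀ t j, ¬ (j = v) → a'' t j = a2 t j := by
    intro t j hj
    simp only [ha'', if_neg hj]
    by_cases hjv : j = v'
    · simp [hjv]
    · simp [hjv, hd2 t j hjv]
  have hd1' : ∀ t j, ¬ (j = v) → a t j = a1 t j := fun t j hj => (hd1 t j hj).symm
  have hd2' : ∀ t j, ¬ (j = v') → a t j = a2 t j := fun t j hj => (hd2 t j hj).symm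
  have hd''1' : ∀ t j, ¬ (j = v') → a'' t j = a1 t j := hd''1
  -- main induction: the combined execution agrees with the base one before `d`
  have key : ∀ u, u < d → (mkE A cd a'').feedback u = (mkE A cd a).feedback u := by
    intro u
    induction u using Nat.strong_induction_on with
    | _ u IH =>
      intro hud
      -- agreement chains below u
      have ag1 : ∀ u', u' < u → (mkE A cd a'').feedback u' = (mkE A cd a1).feedback u' :=
        fun u' h => (IH u' h (lt_trans h hud)).trans (hfb1 u' (lt_trans h hud))
      have ag2 : ∀ u', u' < u → (mkE A cd a'').feedback u' = (mkE A cd a2).feedback u' :=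
        fun u' h => (IH u' h (lt_trans h hud)).trans (hfb2 u' (lt_trans h hud))
      have F1 := agree (cd := cd) hCF (fun j => j = v') a'' a1 hd''1 u ag1
      have F2 := agree (cd := cd) hCF (fun j => j = v) a'' a2 hd''2 u ag2
      have G1 := agree (cd := cd) hCF (fun j => j = v) a a1 hd1' u
        (fun u' h => hfb1 u' (lt_trans h hud))
      have G2 := agree (cd := cd) hCF (fun j => j = v') a a2 hd2' u
        (fun u' h => hfb2 u' (lt_trans h hud))
      have c := hCF cd a (mkE A cd a) (mkE_valid A cd a) u
      have c1 := hCF cd a1 (mkE A cd a1) (mkE_valid A cd a1) u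
      have c2 := hCF cd a2 (mkE A cd a2) (mkE_valid A cd a2) u
      -- membership of v transfers between base and a1 at round u
      have hv1 : v ∈ (mkE A cd a).transmitters u ↔ v ∈ (mkE A cd a1).transmitters u := by
        constructor
        · intro h
          have := mem_trans_of_fb_eq c (hfb1 u hud) h
          rw [this]; exact Finset.mem_singleton_self v
        · intro h
          have := mem_trans_of_fb_eq c1 (hfb1 u hud).symm h
          rw [this]; exact Finset.mem_singleton_self v
      have hv2 : v' ∈ (mkE A cd a).transmitters u ↔ v' ∈ (mkE A cd a2).transmitters u := by
        constructor
        · intro h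
          have := mem_trans_of_fb_eq c (hfb2 u hud) h
          rw [this]; exact Finset.mem_singleton_self v'
        · intro h
          have := mem_trans_of_fb_eq c2 (hfb2 u hud).symm h
          rw [this]; exact Finset.mem_singleton_self v'
      -- transmitters of the combined execution coincide with base at u
      have hTT : (mkE A cd a'').transmitters u = (mkE A cd a).transmitters u := by
        ext j
        by_cases hjv : j = v
        · subst hjv
          rw [memb_iff_of_agree (F1 j hvv').1 (F1 j hvv').2, ← hv1]
        · by_cases hjv' : j = v'
          · subst hjv'
            rw [memb_iff_of_agree (F2 j hjv).1 (F2 j hjv).2, ← hv2]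
          · rw [memb_iff_of_agree (F1 j hjv').1 (F1 j hjv').2,
              ← memb_iff_of_agree (G1 j hjv).1 (G1 j hjv).2]
      refine fb_ext hTT ?_
      intro j hj
      have hjbase : j ∈ (mkE A cd a).transmitters u := hTT ▸ hj
      by_cases hjv : j = v
      · subst hjv
        rw [(F1 j hvv').1]
        -- msg of v in a1 equals msg of v in a
        have hTa : (mkE A cd a).transmitters u = {j} := eq_singleton_of_mem hjbase c
        have hTa1 : (mkE A cd a1).transmitters u = {j} := by
          rw [← hv1] at *; exact mem_trans_of_fb_eq c (hfb1 u hud) hjbase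
        have e1 := fb_singleton (A := A) hTa
        have e2 := fb_singleton (A := A) hTa1
        rw [hfb1 u hud, e2] at e1
        exact (Feedback.heard.inj e1).2
      · by_cases hjv' : j = v'
        · subst hjv'
          rw [(F2 j hjv).1]
          have hTa : (mkE A cd a).transmitters u = {j} := eq_singleton_of_mem hjbase c
          have hTa2 : (mkE A cd a2).transmitters u = {j} :=
            mem_trans_of_fb_eq c (hfb2 u hud) hjbase
          have e1 := fb_singleton (A := A) hTa
          have e2 := fb_singleton (A := A) hTa2
          rw [hfb2 u hud, e2] at e1
          exact (Feedback.heard.inj e1).2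
        · rw [(F1 j hjv').1, (G1 j hjv).1]
  -- now at round d
  have agA : ∀ u', u' < d → (mkE A cd a'').feedback u' = (mkE A cd a1).feedback u' :=
    fun u' h => (key u' h).trans (hfb1 u' h)
  have agB : ∀ u', u' < d → (mkE A cd a'').feedback u' = (mkE A cd a2).feedback u' :=
    fun u' h => (key u' h).trans (hfb2 u' h)
  have F1 := agree (cd := cd) hCF (fun j => j = v') a'' a1 hd''1 d agA
  have F2 := agree (cd := cd) hCF (fun j => j = v) a'' a2 hd''2 d agB
  have hvmem : v ∈ (mkE A cd a'').transmitters d := by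
    rw [memb_iff_of_agree (F1 v hvv').1 (F1 v hvv').2]; exact hm1
  have hvmem' : v' ∈ (mkE A cd a'').transmitters d := by
    rw [memb_iff_of_agree (F2 v' (Ne.symm hvv')).1 (F2 v' (Ne.symm hvv')).2]; exact hm2
  have := hCF cd a'' (mkE A cd a'') (mkE_valid A cd a'') d
  have h2 : 1 < ((mkE A cd a'').transmitters d).card :=
    Finset.one_lt_card.mpr ⟨v, hvmem, v', hvmem', hvv'⟩
  omega

end Stmt4
namespace Stmt4
open Finset

variable {n : ℕ} {A : Algo n} {cd : Bool}

/-- Base pattern: `w-2` packets into node `z` at every multiple of `w`. -/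
def baseA (z : Fin n) (w : ℕ) : ℕ → Fin n → ℕ :=
  fun t i => if i = z ∧ w ∣ t then w - 2 else 0

/-- Bumped pattern: additionally one packet into node `v` at round `τ`. -/
def bumpA (z : Fin n) (w : ℕ) (v : Fin n) (τ : ℕ) : ℕ → Fin n → ℕ :=
  fun t i => baseA z w t i + (if i = v ∧ t = τ then 1 else 0)

lemma bump_diff (z : Fin n) (w : ℕ) (v : Fin n) (τ : ℕ) :
    ∀ t j, ¬ (j = v) → bumpA z w v τ t j = baseA z w t j := by
  intro t j hj
  simp [bumpA, hj]

lemma run_congr (a a' : ℕ → Fin n → ℕ) :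
    ∀ t, (∀ u, u < t → ∀ i, a u i = a' u i) → run A cd a t = run A cd a' t := by
  intro t
  induction t with
  | zero => intro _; rfl
  | succ t ih =>
    intro h
    have ha : a t = a' t := funext (h t (Nat.lt_succ_self t))
    rw [run, run, ih (fun u hu i => h u (Nat.lt_succ_of_lt hu) i), ha]

lemma queue_zero (a : ℕ → Fin n → ℕ) (v : Fin n) :
    ∀ t, (∀ u, u < t → a u v = 0) → (mkE A cd a).queue t v = 0 := by
  intro t
  induction t with
  | zero => intro _; rfl
  | succ t ih =>
    intro h
    have e := (mkE_valid A cd a).2.2.2 t v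
    rw [e, ih (fun u hu => h u (Nat.lt_succ_of_lt hu)), h t (Nat.lt_succ_self t)]
    split_ifs <;> rfl

lemma injCum_bump (z : Fin n) (w : ℕ) (v : Fin n) (τ : ℕ) (hvz : v ≠ z) :
    injCum (bumpA z w v τ) v (τ + 1) = 1 := by
  unfold injCum bumpA baseA
  have : ∀ u ∈ Finset.range (τ + 1),
      ((if v = z ∧ w ∣ u then w - 2 else 0) + (if v = v ∧ u = τ then 1 else 0))
        = (if u = τ then 1 else 0) := by
    intro u _
    simp [hvz]
  rw [Finset.sum_congr rfl this, Finset.sum_ite_eq' (Finset.range (τ + 1)) τ (fun _ => 1)]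
  simp

lemma filter_dvd_card_le_one {w t : ℕ} (hw : 0 < w) :
    ((Finset.Ico t (t + w)).filter (fun u => w ∣ u)).card ≤ 1 := by
  apply Finset.card_le_one.mpr
  intro u hu u' hu'
  simp only [Finset.mem_filter, Finset.mem_Ico] at hu hu'
  obtain ⟨⟨h1, h2⟩, b, rfl⟩ := hu
  obtain ⟨⟨h3, h4⟩, b', rfl⟩ := hu'
  have hb : b < b' + 1 := by
    have h5 : w * b < w * (b' + 1) := by
      calc w * b < t + w := h2
      _ ≤ w * b' + w := Nat.add_le_add_right h3 w
      _ = w * (b' + 1) := by ring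
    exact Nat.lt_of_mul_lt_mul_left h5
  have hb' : b' < b + 1 := by
    have h5 : w * b' < w * (b + 1) := by
      calc w * b' < t + w := h4
      _ ≤ w * b + w := Nat.add_le_add_right h1 w
      _ = w * (b + 1) := by ring
    exact Nat.lt_of_mul_lt_mul_left h5
  have hbb : b = b' := by omega
  rw [hbb]

lemma conforms_base (z : Fin n) (w : ℕ) (hw : 0 < w) :
    Conforms (baseA z w) w (fun i => if i = z then w - 2 else 0) := by
  intro i t
  by_cases hi : i = z
  · subst hi
    simp only [if_pos rfl]
    unfold baseA
    have : ∀ u ∈ Finset.Ico t (t + w),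
        (if i = i ∧ w ∣ u then w - 2 else 0) = (if w ∣ u then w - 2 else 0) := by
      intro u _; simp
    rw [Finset.sum_congr rfl this, ← Finset.sum_filter]
    calc ∑ u ∈ (Finset.Ico t (t + w)).filter (fun u => w ∣ u), (w - 2)
        = ((Finset.Ico t (t + w)).filter (fun u => w ∣ u)).card * (w - 2) := by
          rw [Finset.sum_const, smul_eq_mul]
      _ ≤ 1 * (w - 2) := Nat.mul_le_mul_right _ (filter_dvd_card_le_one hw)
      _ = w - 2 := one_mul _
  · simp only [if_neg hi]
    unfold baseA
    have : ∀ u ∈ Finset.Ico t (t + w), (if i = z ∧ w ∣ u then w - 2 else 0) = 0 := by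
      intro u _; simp [hi]
    rw [Finset.sum_congr rfl this]
    simp

lemma conforms_bump (z : Fin n) (w : ℕ) (v : Fin n) (τ : ℕ) (hw : 0 < w) :
    Conforms (bumpA z w v τ) w
      (fun i => (if i = z then w - 2 else 0) + (if i = v then 1 else 0)) := by
  intro i t
  unfold bumpA
  rw [Finset.sum_add_distrib]
  have h1 := conforms_base z w hw i t
  have h2 : (∑ u ∈ Finset.Ico t (t + w), if i = v ∧ u = τ then 1 else 0)
      ≤ (if i = v then 1 else 0) := by
    by_cases hi : i = v
    · subst hi
      simp only [true_and, if_pos rfl]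
      rw [Finset.sum_ite_eq' (Finset.Ico t (t + w)) τ (fun _ => 1)]
      split_ifs <;> omega
    · simp [hi]
  exact Nat.add_le_add h1 h2

lemma injCum_base_lower (z : Fin n) (w : ℕ) (hw : 0 < w) (M : ℕ) :
    (w - 2) * (M / w + 1) ≤ injCum (baseA z w) z (M + 1) := by
  unfold injCum baseA
  have : ∀ u ∈ Finset.range (M + 1),
      (if z = z ∧ w ∣ u then w - 2 else 0) = (if w ∣ u then w - 2 else 0) := by
    intro u _; simp
  rw [Finset.sum_congr rfl this, ← Finset.sum_filter, Finset.sum_const, smul_eq_mul]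
  have hcard : M / w + 1 ≤ ((Finset.range (M + 1)).filter (fun u => w ∣ u)).card := by
    have : (Finset.range (M / w + 1)).card ≤
        ((Finset.range (M + 1)).filter (fun u => w ∣ u)).card := by
      apply Finset.card_le_card_of_injOn (fun j => j * w)
      · intro j hj
        simp only [Finset.mem_coe, Finset.mem_range] at hj
        simp only [Finset.mem_coe, Finset.mem_filter, Finset.mem_range]
        constructor
        · have : j ≤ M / w := by omega
          have := Nat.mul_le_mul_right w this
          have h2 := Nat.div_mul_le_self M w
          omega
        · exact ⟨j, Nat.mul_comm j w⟩
      · intro j _ j' _ h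
        exact Nat.eq_of_mul_eq_mul_right hw h
    simpa using this
  calc (w - 2) * (M / w + 1) ≤ (w - 2) * ((Finset.range (M + 1)).filter (fun u => w ∣ u)).card :=
        Nat.mul_le_mul_left _ hcard
    _ = _ := Nat.mul_comm _ _

end Stmt4
namespace Stmt4
open Finset

variable {n : ℕ} {A : Algo n}

/-- Extraction: if the bumped execution hears a packet of `v` within `D` rounds
of the bump at `τ`, then some round `d ∈ (τ, τ+D)` is either a `v`-round of the
base execution, or a silent round of the base execution claimed by `v`. -/
lemma extract (hCF : A.ConflictFree) (z v : Fin n) (hvz : v ≠ z) (w τ D : ℕ)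
    (hserve : 1 ≤ (mkE A false (bumpA z w v τ)).heardCum v (τ + D)) :
    ∃ d, τ < d ∧ d < τ + D ∧
      ((mkE A false (baseA z w)).transmitters d = {v} ∨
       ((mkE A false (baseA z w)).transmitters d = ∅ ∧
        v ∈ (mkE A false (bumpA z w v τ)).transmitters d ∧
        ∀ u, u < d →
          (mkE A false (baseA z w)).feedback u = (mkE A false (bumpA z w v τ)).feedback u)) := by
  classical
  set a0 : ℕ → Fin n → ℕ := baseA z w with ha0
  set a1 : ℕ → Fin n → ℕ := bumpA z w v τ with ha1
  set E : Exec A false a0 := mkE A false a0 with hE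
  set E' : Exec A false a1 := mkE A false a1 with hE'
  -- a service round exists
  have hne : ((Finset.range (τ + D)).filter fun u => E'.PacketHeard u v).Nonempty := by
    rw [← Finset.card_pos]
    exact lt_of_lt_of_le Nat.zero_lt_one hserve
  obtain ⟨u₀, hu₀⟩ := hne
  simp only [Finset.mem_filter, Finset.mem_range] at hu₀
  have hex : ∃ t, (E.feedback t ≠ E'.feedback t ∨ E'.PacketHeard t v) :=
    ⟨u₀, Or.inr hu₀.2⟩
  set d := Nat.find hex with hd
  have hQd := Nat.find_spec hex
  rw [← hd] at hQd
  have hmin : ∀ t, t < d → E.feedback t = E'.feedback t ∧ ¬ E'.PacketHeard t v := by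
    intro t ht
    have := Nat.find_min hex ht
    push_neg at this
    exact this
  have hdu : d ≤ u₀ := Nat.find_le (Or.inr hu₀.2)
  have hdD : d < τ + D := lt_of_le_of_lt hdu hu₀.1
  -- no divergence and no service up to round τ
  have hτ : τ < d := by
    rcases Nat.lt_or_ge τ d with h | h
    · exact h
    · exfalso
      -- d ≤ τ : derive ¬ Q d
      have hrun : run A false a0 d = run A false a1 d := by
        apply run_congr
        intro u hu i
        have huτ : u ≠ τ := by omega
        simp [ha0, ha1, bumpA, huτ]
      rcases hQd with hne' | hph
      · apply hne'
        rw [mkE_fb, mkE_fb, hrun]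
      · have hq : E'.queue d v = 0 := by
          apply queue_zero
          intro u hu
          have huτ : u ≠ τ := by omega
          simp [ha1, bumpA, baseA, huτ, hvz]
        have h2 := hph.2
        rw [hq] at h2
        exact lt_irrefl 0 h2
  -- feedback agreement before d
  have hfbag : ∀ u, u < d → E.feedback u = E'.feedback u := fun u hu => (hmin u hu).1
  -- structure at d
  have hdiff : ∀ t j, ¬ (j = v) → a0 t j = a1 t j :=
    fun t j hj => (bump_diff z w v τ t j hj).symm
  have F := agree (cd := false) hCF (fun j => j = v) a0 a1 hdiff d hfbag
  have hmemb : ∀ k, ¬ (k = v) → (k ∈ E.transmitters d ↔ k ∈ E'.transmitters d) :=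
    fun k hk => memb_iff_of_agree (F k hk).1 (F k hk).2
  have c0 := hCF false a0 E (mkE_valid A false a0) d
  have c1 := hCF false a1 E' (mkE_valid A false a1) d
  refine ⟨d, hτ, hdD, ?_⟩
  -- helper: if v ∈ E'.transmitters d then we get the conclusion
  have hfromv : v ∈ E'.transmitters d →
      (E.transmitters d = {v} ∨
       (E.transmitters d = ∅ ∧ v ∈ E'.transmitters d ∧
        ∀ u, u < d → E.feedback u = E'.feedback u)) := by
    intro hv
    have hsub : E.transmitters d ⊆ {v} := by
      intro j hj
      by_cases hjv : j = v
      · rw [hjv]; exact Finset.mem_singleton_self v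
      · exfalso
        have : j ∈ E'.transmitters d := (hmemb j hjv).mp hj
        have hT' : E'.transmitters d = {v} := eq_singleton_of_mem hv c1
        rw [hT'] at this
        exact hjv (Finset.mem_singleton.mp this)
    rcases Finset.subset_singleton_iff.mp hsub with h | h
    · exact Or.inr ⟨h, hv, hfbag⟩
    · exact Or.inl h
  rcases hQd with hne' | hph
  · by_cases hv : v ∈ E'.transmitters d
    · exact hfromv hv
    · by_cases hv0 : v ∈ E.transmitters d
      · exact Or.inl (eq_singleton_of_mem hv0 c0)
      · exfalso
        apply hne'
        have hTT : E.transmitters d = E'.transmitters d := by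
          ext j
          by_cases hjv : j = v
          · subst hjv; simp [hv, hv0]
          · exact hmemb j hjv
        refine fb_ext hTT ?_
        intro j hj
        have hjv : ¬ (j = v) := fun h => hv0 (h ▸ hj)
        rw [(F j hjv).1]
  · exact hfromv (by rw [hph.1]; exact Finset.mem_singleton_self v)

end Stmt4
set_option maxHeartbeats 1000000 in
open Stmt4 in

/-- There are a constant `c > 0` and thresholds `n₀`, `w₀` such
that every conflict-free algorithm on `n ≥ n₀` nodes admits, for every window
size `w ≥ w₀`, a window adversary of window `w` with aggregate injection rate
strictly less than `1` (the sum of the shares is less than `w`) and an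
execution in which some packet is delayed by at least `c · n · w` rounds. -/
theorem stmt4 :
    ∃ c : ℝ, 0 < c ∧ ∃ n₀ w₀ : ℕ,
      ∀ (n : ℕ), n₀ ≤ n → ∀ (A : Algo n), A.ConflictFree →
        ∀ (w : ℕ), w₀ ≤ w →
          ∃ (s : Fin n → ℕ) (a : ℕ → Fin n → ℕ),
            (∑ i, s i) < w ∧ Conforms a w s ∧
            ∃ E : Exec A false a, E.Valid ∧
              ∃ D : ℕ, c * n * w ≤ (D : ℝ) ∧ E.DelayAtLeast D := by
  classical
  refine ⟨1/8, by norm_num, 8, 4, ?_⟩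
  intro n hn A hCF w hw
  by_contra hno
  push_neg at hno
  have hnz : 0 < n := by omega
  set z : Fin n := ⟨0, hnz⟩ with hzdef
  have hw0 : 0 < w := by omega
  have h32 : 32 ≤ n * w := by
    calc 32 = 8 * 4 := rfl
    _ ≤ n * w := Nat.mul_le_mul hn hw
  obtain ⟨D, h8D, hD8, hD4⟩ : ∃ D : ℕ, n * w < 8 * D ∧ 8 * D ≤ n * w + 8 ∧ 4 ≤ D := by
    refine ⟨n * w / 8 + 1, ?_, ?_, ?_⟩
    · have := Nat.div_add_mod (n * w) 8
      omega
    · have := Nat.div_mul_le_self (n * w) 8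
      omega
    · have := Nat.div_add_mod (n * w) 8
      omega
  have hDT : D ≤ D * D := Nat.le_mul_of_pos_left D (by omega)
  have hcD : (1/8 : ℝ) * n * w ≤ (D : ℝ) := by
    have h : ((n * w : ℕ) : ℝ) < ((8 * D : ℕ) : ℝ) := Nat.cast_lt.mpr h8D
    push_cast at h
    linarith
  -- the base adversary causes no large delay
  have hsum0 : (∑ i, if i = z then w - 2 else 0) < w := by
    rw [Finset.sum_ite_eq' Finset.univ z (fun _ => w - 2), if_pos (Finset.mem_univ z)]
    omega
  have hnob := hno (fun i => if i = z then w - 2 else 0) (baseA z w) hsum0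
    (conforms_base z w hw0) (mkE A false (baseA z w))
    (mkE_valid A false (baseA z w)) D hcD
  simp only [Exec.DelayAtLeast, not_exists, not_lt] at hnob
  -- the bumped adversaries cause no large delay either: service within D rounds
  have hserve : ∀ v : Fin n, v ≠ z → ∀ k : ℕ,
      1 ≤ (mkE A false (bumpA z w v (k * D))).heardCum v (k * D + D) := by
    intro v hvz k
    have hsum' : (∑ i, ((if i = z then w - 2 else 0) + (if i = v then 1 else 0))) < w := by
      rw [Finset.sum_add_distrib,
        Finset.sum_ite_eq' Finset.univ z (fun _ => w - 2), if_pos (Finset.mem_univ z),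
        Finset.sum_ite_eq' Finset.univ v (fun _ => 1), if_pos (Finset.mem_univ v)]
      omega
    have hnb := hno (fun i => (if i = z then w - 2 else 0) + (if i = v then 1 else 0))
      (bumpA z w v (k * D)) hsum' (conforms_bump z w v (k * D) hw0)
      (mkE A false (bumpA z w v (k * D)))
      (mkE_valid A false (bumpA z w v (k * D))) D hcD
    simp only [Exec.DelayAtLeast, not_exists, not_lt] at hnb
    have h := hnb v (k * D)
    rwa [injCum_bump z w v (k * D) hvz] at h
  -- extraction
  have EX : ∀ v : Fin n, v ≠ z → ∀ k : ℕ, ∃ d, k * D < d ∧ d < k * D + D ∧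
      ((mkE A false (baseA z w)).transmitters d = {v} ∨
       ((mkE A false (baseA z w)).transmitters d = ∅ ∧
        v ∈ (mkE A false (bumpA z w v (k * D))).transmitters d ∧
        ∀ u, u < d → (mkE A false (baseA z w)).feedback u =
          (mkE A false (bumpA z w v (k * D))).feedback u)) :=
    fun v hvz k => extract hCF z v hvz w (k * D) D (hserve v hvz k)
  set f : Fin n × ℕ → ℕ := fun x =>
    if h : x.1 ≠ z then (EX x.1 h x.2).choose else 0 with hfdef
  set P : Finset (Fin n × ℕ) := (Finset.univ.erase z) ×ˢ Finset.range D with hPdef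
  set Bc : Finset ℕ := (Finset.range (D * D)).filter
    (fun t => z ∈ (mkE A false (baseA z w)).transmitters t) with hBcdef
  set G : Finset ℕ := Finset.range (D * D) \ Bc with hGdef
  have hmaps : ∀ x ∈ P, f x ∈ G := by
    intro x hx
    obtain ⟨hx1, hx2⟩ := Finset.mem_product.mp hx
    have hvz : x.1 ≠ z := (Finset.mem_erase.mp hx1).1
    have hk : x.2 < D := Finset.mem_range.mp hx2
    have hfx : f x = (EX x.1 hvz x.2).choose := dif_pos hvz
    obtain ⟨h1, h2, h3⟩ := (EX x.1 hvz x.2).choose_spec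
    rw [hfx]
    have hnm : z ∉ (mkE A false (baseA z w)).transmitters ((EX x.1 hvz x.2).choose) := by
      rcases h3 with h | h
      · rw [h]
        simp only [Finset.mem_singleton]
        exact fun hh => hvz hh.symm
      · rw [h.1]
        exact Finset.notMem_empty z
    refine Finset.mem_sdiff.mpr ⟨Finset.mem_range.mpr ?_, ?_⟩
    · calc (EX x.1 hvz x.2).choose < x.2 * D + D := h2
        _ = (x.2 + 1) * D := by ring
        _ ≤ D * D := Nat.mul_le_mul_right D (by omega)
    · rw [hBcdef]
      intro hmem
      exact hnm (Finset.mem_filter.mp hmem).2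
  have hinj : Set.InjOn f P := by
    intro x hx y hy hfe
    obtain ⟨hx1, hx2⟩ := Finset.mem_product.mp hx
    obtain ⟨hy1, hy2⟩ := Finset.mem_product.mp hy
    have hvzx : x.1 ≠ z := (Finset.mem_erase.mp hx1).1
    have hvzy : y.1 ≠ z := (Finset.mem_erase.mp hy1).1
    have hfx : f x = (EX x.1 hvzx x.2).choose := dif_pos hvzx
    have hfy : f y = (EX y.1 hvzy y.2).choose := dif_pos hvzy
    obtain ⟨h1x, h2x, h3x⟩ := (EX x.1 hvzx x.2).choose_spec
    obtain ⟨h1y, h2y, h3y⟩ := (EX y.1 hvzy y.2).choose_spec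
    rw [hfx] at hfe
    rw [hfy] at hfe
    rw [← hfe] at h1y h2y h3y
    have hkk : x.2 = y.2 := by
      by_contra hne
      rcases Nat.lt_or_ge x.2 y.2 with hlt | hge
      · have hcon : (EX x.1 hvzx x.2).choose < (EX x.1 hvzx x.2).choose := by
          calc (EX x.1 hvzx x.2).choose < x.2 * D + D := h2x
            _ = (x.2 + 1) * D := by ring
            _ ≤ y.2 * D := Nat.mul_le_mul_right D hlt
            _ < (EX x.1 hvzx x.2).choose := h1y
        exact absurd hcon (lt_irrefl _)
      · have hlt : y.2 < x.2 := by omega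
        have hcon : (EX x.1 hvzx x.2).choose < (EX x.1 hvzx x.2).choose := by
          calc (EX x.1 hvzx x.2).choose < y.2 * D + D := h2y
            _ = (y.2 + 1) * D := by ring
            _ ≤ x.2 * D := Nat.mul_le_mul_right D hlt
            _ < (EX x.1 hvzx x.2).choose := h1x
        exact absurd hcon (lt_irrefl _)
    by_cases hvv : x.1 = y.1
    · exact Prod.ext hvv hkk
    · exfalso
      rcases h3x with hA | hA <;> rcases h3y with hB | hB
      · exact hvv (Finset.singleton_injective (hA.symm.trans hB))
      · exact (Finset.singleton_ne_empty x.1) (hA.symm.trans hB.1)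
      · exact (Finset.singleton_ne_empty y.1) (hB.symm.trans hA.1)
      · exact noTwoClaim hCF hvv
          (bump_diff z w x.1 (x.2 * D)) (bump_diff z w y.1 (y.2 * D))
          hA.2.2 hB.2.2 hA.2.1 hB.2.1
  have hcardP : P.card = (n - 1) * D := by
    rw [hPdef, Finset.card_product, Finset.card_erase_of_mem (Finset.mem_univ z),
      Finset.card_univ, Fintype.card_fin, Finset.card_range]
  have hmain : (n - 1) * D ≤ G.card := by
    rw [← hcardP]
    exact Finset.card_le_card_of_injOn f hmaps hinj
  have hBcle : Bc.card ≤ (Finset.range (D * D)).card :=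
    Finset.card_le_card (Finset.filter_subset _ _)
  have hsplit : Bc.card + G.card = (Finset.range (D * D)).card := by
    rw [hGdef, Finset.card_sdiff_of_subset]
    · omega
    · rw [hBcdef]; exact Finset.filter_subset _ _
  have hhb : (mkE A false (baseA z w)).heardCum z (D * D) ≤ Bc.card := by
    rw [hBcdef]
    apply Finset.card_le_card
    intro u hu
    rw [Finset.mem_filter] at hu ⊢
    refine ⟨hu.1, ?_⟩
    rw [hu.2.1]
    exact Finset.mem_singleton_self z
  have hheard : injCum (baseA z w) z (D * D - D + 1) ≤
      (mkE A false (baseA z w)).heardCum z (D * D) := by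
    have h := hnob z (D * D - D)
    rwa [Nat.sub_add_cancel hDT] at h
  have hinjlow := injCum_base_lower z w hw0 (D * D - D)
  have hfinal : (n - 1) * D + (w - 2) * ((D * D - D) / w + 1) ≤ D * D := by
    calc (n - 1) * D + (w - 2) * ((D * D - D) / w + 1)
        ≤ G.card + Bc.card := Nat.add_le_add hmain
          (le_trans hinjlow (le_trans hheard hhb))
      _ = (Finset.range (D * D)).card := by omega
      _ = D * D := Finset.card_range _
  -- numeric contradiction
  obtain ⟨q, hq1, hq2, hfin⟩ : ∃ q : ℕ, w * q ≤ D * D - D ∧ D * D - D < w * q + w ∧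
      (n - 1) * D + (w - 2) * (q + 1) ≤ D * D := by
    refine ⟨(D * D - D) / w, ?_, ?_, hfinal⟩
    · calc w * ((D * D - D) / w) ≤ w * ((D * D - D) / w) + (D * D - D) % w :=
          Nat.le_add_right _ _
        _ = D * D - D := Nat.div_add_mod _ _
    · calc D * D - D = w * ((D * D - D) / w) + (D * D - D) % w := (Nat.div_add_mod _ _).symm
        _ < w * ((D * D - D) / w) + w := Nat.add_lt_add_left (Nat.mod_lt _ hw0) _
  -- move to ℝ
  have hMcast : ((D * D - D : ℕ) : ℝ) = (D : ℝ) * D - D := by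
    push_cast [Nat.cast_sub hDT]
    ring
  have R1 : ((n : ℝ) - 1) * D + ((w : ℝ) - 2) * ((q : ℝ) + 1) ≤ (D : ℝ) * D := by
    have h := (Nat.cast_le (α := ℝ)).mpr hfin
    push_cast [Nat.cast_sub (show 1 ≤ n by omega), Nat.cast_sub (show 2 ≤ w by omega)] at h
    linarith
  have R2 : (w : ℝ) * q ≤ (D : ℝ) * D - D := by
    have h := (Nat.cast_le (α := ℝ)).mpr hq1
    rw [hMcast] at h
    push_cast at h
    linarith
  have R3 : (D : ℝ) * D - D < (w : ℝ) * q + w := by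
    have h := (Nat.cast_lt (α := ℝ)).mpr hq2
    rw [hMcast] at h
    push_cast at h
    linarith
  have R5 : 8 * (D : ℝ) ≤ (n : ℝ) * w + 8 := by
    have h := (Nat.cast_le (α := ℝ)).mpr hD8
    push_cast at h
    linarith
  have Rn : (8 : ℝ) ≤ n := by exact_mod_cast hn
  have Rw : (4 : ℝ) ≤ w := by exact_mod_cast hw
  have RD : (4 : ℝ) ≤ D := by exact_mod_cast hD4
  have hw0R : (0 : ℝ) < w := by linarith
  have hD0R : (0 : ℝ) ≤ D := by linarith
  have S1 : ((n : ℝ) - 2) * D - 2 < 2 * q := by linarith [R1, R3]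
  have S2' := mul_lt_mul_of_pos_left S1 hw0R
  have S2 : (w : ℝ) * (((n : ℝ) - 2) * D - 2) < 2 * ((D : ℝ) * D - D) := by
    linarith [S2', R2]
  have S3 : 8 * (D : ℝ) * D ≤ ((n : ℝ) * w + 8) * D := mul_le_mul_of_nonneg_right R5 hD0R
  have h1 : (0 : ℝ) ≤ ((n : ℝ) - 8) * ((w : ℝ) * D) :=
    mul_nonneg (by linarith) (mul_nonneg (le_of_lt hw0R) hD0R)
  have h2 : (0 : ℝ) ≤ (w : ℝ) * ((D : ℝ) - 4) := mul_nonneg (le_of_lt hw0R) (by linarith)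
  nlinarith [S2, S3, h1, h2, hw0R, RD, Rw]
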